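/- arXiv:2404.12589 — 2 statements merged into one kernel-verified Lean document; each statement's English description precedes it below -/
import Mathlib

section
/- (Partition lemma for KL divergence of Markov chains.) Let 𝒳 = 𝒳⁽¹⁾ × ⋯ × 𝒳⁽ᵈ⁾ be a finite product state space, let π ∈ 𝒫(𝒳) be strictly positive, P, L ∈ ℒ(𝒳), and let ∅ ≠ S ⊆ ⟦d⟧. Then D_KL^π(P ‖ L) ≥ D_KL^{π⁽ˢ⁾}(P_π⁽ˢ⁾ ‖ L_π⁽ˢ⁾). This holds regardless of whether π is a product probability mass or P or L is a product transition matrix. -/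
open Filter Finset
open scoped Classical

/-- `p` is a probability mass on the finite set `Y`. -/
def IsProbMass {Y : Type*} [Fintype Y] (p : Y → ℝ) : Prop :=
  (∀ x, 0 ≤ p x) ∧ ∑ x, p x = 1

/-- `M` is a transition matrix (row-stochastic matrix) on the finite set `Y`. -/
def IsTransMat {Y : Type*} [Fintype Y] (M : Y → Y → ℝ) : Prop :=
  (∀ x y, 0 ≤ M x y) ∧ ∀ x, ∑ y, M x y = 1

/-- The tensor product `⊗ᵢ Lᵢ` of transition matrices on a finite product space. -/
noncomputable def tensorMat {d : ℕ} {X : Fin d → Type*} (L : ∀ i, X i → X i → ℝ) :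
    (∀ i, X i) → (∀ i, X i) → ℝ :=
  fun x y => ∏ i, L i (x i) (y i)

/-- The term `M(x,y)·ln(M(x,y)/L(x,y))` with the conventions `0·ln(0/·) := 0` and
`a·ln(a/0) := +∞` for `a > 0`. -/
noncomputable def klTerm (m l : ℝ) : EReal :=
  if m = 0 then 0 else if l = 0 then ⊤ else ((m * Real.log (m / l) : ℝ) : EReal)

/-- The KL divergence `D_KL^π(M ‖ L)` between transition matrices, with the convention
`0·∞ := 0` (EReal multiplication). -/
noncomputable def klDiv {Y : Type*} [Fintype Y] (π : Y → ℝ) (M L : Y → Y → ℝ) : EReal :=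
  ∑ x, (π x : EReal) * ∑ y, klTerm (M x y) (L x y)

/-- The marginal `π⁽ˢ⁾` of `π` on the coordinates in `S`. -/
noncomputable def margS {d : ℕ} {X : Fin d → Type*} [∀ i, Fintype (X i)]
    (π : (∀ i, X i) → ℝ) (S : Finset (Fin d)) : (∀ j : S, X j.1) → ℝ :=
  fun xs => ∑ x : ∀ i, X i, if ∀ j : S, x j.1 = xs j then π x else 0

/-- The keep-`S`-in transition matrix `P_π⁽ˢ⁾` of `P` with respect to `π`. -/
noncomputable def keepS {d : ℕ} {X : Fin d → Type*} [∀ i, Fintype (X i)]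
    (π : (∀ i, X i) → ℝ) (P : (∀ i, X i) → (∀ i, X i) → ℝ) (S : Finset (Fin d)) :
    (∀ j : S, X j.1) → (∀ j : S, X j.1) → ℝ :=
  fun xs ys =>
    (∑ x : ∀ i, X i, ∑ y : ∀ i, X i,
        if (∀ j : S, x j.1 = xs j) ∧ (∀ j : S, y j.1 = ys j) then π x * P x y else 0) /
      margS π S xs

section Aux

lemma real_log_sum {ι : Type*} (t : Finset ι) (a b : ι → ℝ)
    (ha : ∀ i ∈ t, 0 ≤ a i) (hb : ∀ i ∈ t, 0 ≤ b i) (hab : ∀ i ∈ t, b i = 0 → a i = 0)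
    (hB : 0 < ∑ i ∈ t, b i) :
    (∑ i ∈ t, a i) * Real.log ((∑ i ∈ t, a i) / (∑ i ∈ t, b i)) ≤
      ∑ i ∈ t, a i * Real.log (a i / b i) := by
  set A := ∑ i ∈ t, a i with hA
  set B := ∑ i ∈ t, b i with hBdef
  have key := Real.convexOn_mul_log.map_sum_le (t := t) (w := fun i => b i / B)
      (p := fun i => a i / b i) (fun i hi => div_nonneg (hb i hi) hB.le)
      (by rw [← Finset.sum_div]; exact div_self hB.ne')
      (fun i hi => Set.mem_Ici.mpr (div_nonneg (ha i hi) (hb i hi)))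
  have h1 : ∑ i ∈ t, (b i / B) • (a i / b i) = A / B := by
    rw [hA, Finset.sum_div]
    refine Finset.sum_congr rfl fun i hi => ?_
    rcases eq_or_ne (b i) 0 with h | h
    · rw [smul_eq_mul, hab i hi h, h]; simp
    · rw [smul_eq_mul]; field_simp
  have h2 : ∑ i ∈ t, (b i / B) • ((a i / b i) * Real.log (a i / b i))
      = (∑ i ∈ t, a i * Real.log (a i / b i)) / B := by
    rw [Finset.sum_div]
    refine Finset.sum_congr rfl fun i hi => ?_
    rcases eq_or_ne (b i) 0 with h | h
    · rw [smul_eq_mul, hab i hi h, h]; simp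
    · rw [smul_eq_mul]; field_simp
  simp only [smul_eq_mul] at key h1 h2
  rw [h1, h2] at key
  have hh : A / B * Real.log (A / B) = (A * Real.log (A / B)) / B := by ring
  rw [hh] at key
  exact (div_le_div_iff_of_pos_right hB).mp key

lemma ereal_coe_mul_ne_bot {c : ℝ} (hc : 0 < c) {y : EReal} (hy : y ≠ ⊥) :
    (c : EReal) * y ≠ ⊥ := by
  induction y using EReal.rec with
  | bot => exact absurd rfl hy
  | top => rw [EReal.coe_mul_top_of_pos hc]; simp
  | coe y => rw [← EReal.coe_mul]; exact EReal.coe_ne_bot _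

lemma ereal_coe_mul_add (c : ℝ) (hc : 0 ≤ c) {x y : EReal} (hx : x ≠ ⊥) (hy : y ≠ ⊥) :
    (c : EReal) * (x + y) = c * x + c * y := by
  rcases eq_or_lt_of_le hc with rfl | hc
  · simp
  · induction x using EReal.rec with
    | bot => exact absurd rfl hx
    | top =>
        rw [EReal.top_add_of_ne_bot hy, EReal.coe_mul_top_of_pos hc,
          EReal.top_add_of_ne_bot (ereal_coe_mul_ne_bot hc hy)]
    | coe x =>
        induction y using EReal.rec with
        | bot => exact absurd rfl hy
        | top =>
            rw [EReal.add_top_of_ne_bot (EReal.coe_ne_bot x), EReal.coe_mul_top_of_pos hc,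
              EReal.add_top_of_ne_bot (ereal_coe_mul_ne_bot hc (EReal.coe_ne_bot x))]
        | coe y => norm_cast; ring

lemma ereal_sum_ne_bot {ι : Type*} (t : Finset ι) (f : ι → EReal)
    (hf : ∀ i ∈ t, f i ≠ ⊥) : ∑ i ∈ t, f i ≠ ⊥ := by
  classical
  revert hf
  refine Finset.induction_on t (by simp) ?_
  intro a s hs ih hf
  rw [Finset.sum_insert hs, Ne, EReal.add_eq_bot_iff]
  push_neg
  exact ⟨hf a (Finset.mem_insert_self a s), ih fun i hi => hf i (Finset.mem_insert_of_mem hi)⟩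

lemma ereal_coe_mul_sum {ι : Type*} (t : Finset ι) (c : ℝ) (hc : 0 ≤ c) (f : ι → EReal)
    (hf : ∀ i ∈ t, f i ≠ ⊥) :
    (c : EReal) * ∑ i ∈ t, f i = ∑ i ∈ t, (c : EReal) * f i := by
  classical
  revert hf
  refine Finset.induction_on t (by simp) ?_
  intro a s hs ih hf
  rw [Finset.sum_insert hs, Finset.sum_insert hs,
    ereal_coe_mul_add c hc (hf a (Finset.mem_insert_self a s))
      (ereal_sum_ne_bot s f fun i hi => hf i (Finset.mem_insert_of_mem hi)),
    ih fun i hi => hf i (Finset.mem_insert_of_mem hi)]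

lemma ereal_coe_sum {ι : Type*} (t : Finset ι) (f : ι → ℝ) :
    ((∑ i ∈ t, f i : ℝ) : EReal) = ∑ i ∈ t, (f i : EReal) := by
  classical
  refine Finset.induction_on t (by simp) ?_
  intro a s hs ih
  rw [Finset.sum_insert hs, Finset.sum_insert hs, EReal.coe_add, ih]

lemma klTerm_ne_bot (m l : ℝ) : klTerm m l ≠ ⊥ := by
  unfold klTerm
  split_ifs
  · simp
  · simp
  · exact EReal.coe_ne_bot _

lemma klTerm_smul {c : ℝ} (hc : 0 < c) (m l : ℝ) :
    klTerm (c * m) (c * l) = (c : EReal) * klTerm m l := by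
  unfold klTerm
  by_cases hm : m = 0
  · subst hm; simp
  · have h1 : c * m ≠ 0 := mul_ne_zero hc.ne' hm
    by_cases hl : l = 0
    · subst hl
      rw [mul_zero, if_neg h1, if_neg hm, if_pos rfl, if_pos rfl,
        EReal.coe_mul_top_of_pos hc]
    · have h2 : c * l ≠ 0 := mul_ne_zero hc.ne' hl
      rw [if_neg h1, if_neg h2, if_neg hm, if_neg hl,
        mul_div_mul_left _ _ hc.ne', ← EReal.coe_mul]
      norm_cast
      ring

lemma klTerm_sum_le {ι : Type*} (t : Finset ι) (a b : ι → ℝ)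
    (ha : ∀ i ∈ t, 0 ≤ a i) (hb : ∀ i ∈ t, 0 ≤ b i) :
    klTerm (∑ i ∈ t, a i) (∑ i ∈ t, b i) ≤ ∑ i ∈ t, klTerm (a i) (b i) := by
  classical
  by_cases hA : ∑ i ∈ t, a i = 0
  · have h0 : ∀ i ∈ t, a i = 0 := (Finset.sum_eq_zero_iff_of_nonneg ha).1 hA
    have h1 : ∑ i ∈ t, klTerm (a i) (b i) = 0 :=
      Finset.sum_eq_zero fun i hi => by rw [h0 i hi]; simp [klTerm]
    rw [h1, klTerm, if_pos hA]
  · by_cases hbad : ∃ i ∈ t, b i = 0 ∧ a i ≠ 0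
    · obtain ⟨i, hi, hbi, hai⟩ := hbad
      have htop : ∑ j ∈ t, klTerm (a j) (b j) = ⊤ := by
        rw [← Finset.add_sum_erase _ _ hi]
        have h1 : klTerm (a i) (b i) = ⊤ := by rw [klTerm, if_neg hai, if_pos hbi]
        rw [h1, EReal.top_add_of_ne_bot
          (ereal_sum_ne_bot _ _ fun j _ => klTerm_ne_bot _ _)]
      rw [htop]; exact le_top
    · push_neg at hbad
      have hab : ∀ i ∈ t, b i = 0 → a i = 0 := hbad
      have hB : 0 < ∑ i ∈ t, b i := by
        rcases (Finset.sum_nonneg hb).eq_or_lt with h | h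
        · exfalso
          have h0 : ∀ i ∈ t, b i = 0 := (Finset.sum_eq_zero_iff_of_nonneg hb).1 h.symm
          exact hA (Finset.sum_eq_zero fun i hi => hab i hi (h0 i hi))
        · exact h
      rw [klTerm, if_neg hA, if_neg hB.ne']
      have hterm : ∀ i ∈ t, klTerm (a i) (b i) = ((a i * Real.log (a i / b i) : ℝ) : EReal) := by
        intro i hi
        by_cases hai : a i = 0
        · rw [klTerm, if_pos hai, hai]; norm_num
        · have hbi : b i ≠ 0 := fun h => hai (hab i hi h)
          rw [klTerm, if_neg hai, if_neg hbi]
      rw [Finset.sum_congr rfl hterm, ← ereal_coe_sum]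
      exact_mod_cast real_log_sum t a b ha hb hab hB

/-- The numerator of `keepS`, as a function on pairs. -/
noncomputable def numer {d : ℕ} {X : Fin d → Type*} [∀ i, Fintype (X i)]
    (π : (∀ i, X i) → ℝ) (M : (∀ i, X i) → (∀ i, X i) → ℝ) (S : Finset (Fin d))
    (q : (∀ j : S, X j.1) × (∀ j : S, X j.1)) : ℝ :=
  ∑ p : (∀ i, X i) × (∀ i, X i),
    if (∀ j : S, p.1 j.1 = q.1 j) ∧ (∀ j : S, p.2 j.1 = q.2 j) then π p.1 * M p.1 p.2 else 0

end Aux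

/-- Partition lemma for the KL divergence of Markov chains:
`D_KL^π(P ‖ L) ≥ D_KL^{π⁽ˢ⁾}(P_π⁽ˢ⁾ ‖ L_π⁽ˢ⁾)` for every nonempty `S ⊆ ⟦d⟧`. -/
theorem stmt11 {d : ℕ} {X : Fin d → Type*} [∀ i, Fintype (X i)]
    (π : (∀ i, X i) → ℝ) (hπ : IsProbMass π) (hpos : ∀ x, 0 < π x)
    (P L : (∀ i, X i) → (∀ i, X i) → ℝ) (hP : IsTransMat P) (hL : IsTransMat L)
    (S : Finset (Fin d)) (hS : S.Nonempty) :
    klDiv (margS π S) (keepS π P S) (keepS π L S) ≤ klDiv π P L := by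
  classical
  obtain ⟨x₀⟩ : Nonempty (∀ i, X i) := by
    by_contra h
    rw [not_nonempty_iff] at h
    have h1 := hπ.2
    rw [Finset.univ_eq_empty, Finset.sum_empty] at h1
    norm_num at h1
  have hmarg : ∀ xs, 0 < margS π S xs := by
    intro xs
    refine Finset.sum_pos' (fun x _ => ?_) ?_
    · split_ifs
      · exact (hpos _).le
      · exact le_rfl
    · refine ⟨fun i => if h : i ∈ S then xs ⟨i, h⟩ else x₀ i, Finset.mem_univ _, ?_⟩
      have hcond : ∀ j : S, (fun i => if h : i ∈ S then xs ⟨i, h⟩ else x₀ i) j.1 = xs j :=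
        fun j => dif_pos j.2
      rw [if_pos hcond]
      exact hpos _
  -- rewrite the right-hand side
  have hRHS : klDiv π P L = ∑ p : (∀ i, X i) × (∀ i, X i),
      klTerm (π p.1 * P p.1 p.2) (π p.1 * L p.1 p.2) := by
    unfold klDiv
    rw [Fintype.sum_prod_type]
    refine Finset.sum_congr rfl fun x _ => ?_
    rw [ereal_coe_mul_sum _ _ (hpos x).le _ fun y _ => klTerm_ne_bot _ _]
    exact Finset.sum_congr rfl fun y _ => (klTerm_smul (hpos x) _ _).symm
  -- rewrite the left-hand side
  have hkeep : ∀ (M : (∀ i, X i) → (∀ i, X i) → ℝ) (xs ys : ∀ j : S, X j.1),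
      margS π S xs * keepS π M S xs ys = numer π M S (xs, ys) := by
    intro M xs ys
    unfold keepS
    rw [mul_comm, div_mul_cancel₀ _ (hmarg xs).ne']
    unfold numer
    rw [Fintype.sum_prod_type]
  have hLHS : klDiv (margS π S) (keepS π P S) (keepS π L S)
      = ∑ q : (∀ j : S, X j.1) × (∀ j : S, X j.1),
          klTerm (numer π P S q) (numer π L S q) := by
    unfold klDiv
    rw [Fintype.sum_prod_type]
    refine Finset.sum_congr rfl fun xs _ => ?_
    rw [ereal_coe_mul_sum _ _ (hmarg xs).le _ fun ys _ => klTerm_ne_bot _ _]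
    refine Finset.sum_congr rfl fun ys _ => ?_
    rw [← klTerm_smul (hmarg xs), hkeep P, hkeep L]
  -- the pointwise log-sum inequality
  have hstep : ∀ q : (∀ j : S, X j.1) × (∀ j : S, X j.1),
      klTerm (numer π P S q) (numer π L S q) ≤
      ∑ p : (∀ i, X i) × (∀ i, X i),
        if (∀ j : S, p.1 j.1 = q.1 j) ∧ (∀ j : S, p.2 j.1 = q.2 j) then
          klTerm (π p.1 * P p.1 p.2) (π p.1 * L p.1 p.2) else 0 := by
    intro q
    set c : ((∀ i, X i) × (∀ i, X i)) → Prop :=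
      fun p => (∀ j : S, p.1 j.1 = q.1 j) ∧ (∀ j : S, p.2 j.1 = q.2 j) with hc
    have e1 : numer π P S q = ∑ p ∈ Finset.univ.filter c, π p.1 * P p.1 p.2 :=
      (Finset.sum_filter _ _).symm
    have e2 : numer π L S q = ∑ p ∈ Finset.univ.filter c, π p.1 * L p.1 p.2 :=
      (Finset.sum_filter _ _).symm
    have e3 : (∑ p : (∀ i, X i) × (∀ i, X i),
        if c p then klTerm (π p.1 * P p.1 p.2) (π p.1 * L p.1 p.2) else 0)
        = ∑ p ∈ Finset.univ.filter c, klTerm (π p.1 * P p.1 p.2) (π p.1 * L p.1 p.2) :=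
      (Finset.sum_filter _ _).symm
    rw [e1, e2, e3]
    exact klTerm_sum_le _ _ _
      (fun p _ => mul_nonneg (hpos p.1).le (hP.1 p.1 p.2))
      (fun p _ => mul_nonneg (hpos p.1).le (hL.1 p.1 p.2))
  -- collapsing the indicator sum
  have hcollapse : ∀ (p : (∀ i, X i) × (∀ i, X i)) (v : EReal),
      (∑ q : (∀ j : S, X j.1) × (∀ j : S, X j.1),
        if (∀ j : S, p.1 j.1 = q.1 j) ∧ (∀ j : S, p.2 j.1 = q.2 j) then v else 0) = v := by
    intro p v
    rw [Finset.sum_eq_single (((fun j => p.1 j.1 : ∀ j : S, X j.1),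
        (fun j => p.2 j.1 : ∀ j : S, X j.1)))]
    · rw [if_pos ⟨fun j => rfl, fun j => rfl⟩]
    · intro q _ hq
      rw [if_neg]
      rintro ⟨h1, h2⟩
      exact hq (Prod.ext_iff.mpr
        ⟨funext fun j => (h1 j).symm, funext fun j => (h2 j).symm⟩)
    · intro h; exact absurd (Finset.mem_univ _) h
  rw [hLHS, hRHS]
  calc ∑ q : (∀ j : S, X j.1) × (∀ j : S, X j.1), klTerm (numer π P S q) (numer π L S q)
      ≤ ∑ q : (∀ j : S, X j.1) × (∀ j : S, X j.1), ∑ p : (∀ i, X i) × (∀ i, X i),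
          if (∀ j : S, p.1 j.1 = q.1 j) ∧ (∀ j : S, p.2 j.1 = q.2 j) then
            klTerm (π p.1 * P p.1 p.2) (π p.1 * L p.1 p.2) else 0 :=
        Finset.sum_le_sum fun q _ => hstep q
    _ = ∑ p : (∀ i, X i) × (∀ i, X i), ∑ q : (∀ j : S, X j.1) × (∀ j : S, X j.1),
          if (∀ j : S, p.1 j.1 = q.1 j) ∧ (∀ j : S, p.2 j.1 = q.2 j) then
            klTerm (π p.1 * P p.1 p.2) (π p.1 * L p.1 p.2) else 0 := Finset.sum_comm
    _ = ∑ p : (∀ i, X i) × (∀ i, X i), klTerm (π p.1 * P p.1 p.2) (π p.1 * L p.1 p.2) :=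
        Finset.sum_congr rfl fun p _ => hcollapse p _
end

section
/- (Pythagorean inequality for clique factorizations.) Let 𝒳 = 𝒳⁽¹⁾ × ⋯ × 𝒳⁽ᵈ⁾ be a finite product state space, let (Cᵢ)_{i=1}^n be subsets of ⟦d⟧ with ∪_{i=1}^n Cᵢ = ⟦d⟧, let π ∈ 𝒫(𝒳) be strictly positive, and P ∈ ℒ(𝒳). Let Lᵢ ∈ ℒ(𝒳^{(Cᵢ)}) for i = 1,…,n and let M ∈ ℒ(𝒳) be defined by M(x,y) := (1/Z(x,(Lᵢ))) ∏_{i=1}^n Lᵢ(x^{(Cᵢ)},y^{(Cᵢ)}) with Z(x,(Lᵢ)) := Σ_{y∈𝒳} ∏_{i=1}^n Lᵢ(x^{(Cᵢ)},y^{(Cᵢ)}), and let 𝐏_π ∈ ℒ(𝒳) be defined analogously with Lᵢ replaced by the keep-Cᵢ-in matrices P_π^{(Cᵢ)}. Assume Z(x,(Lᵢ)) and Z(x,(P_π^{(Cᵢ)})) are strictly positive for all x, and that Z(x,(Lᵢ)) ≥ Z(x,(P_π^{(Cᵢ)})) for all x ∈ 𝒳. Then D_KL^π(P ‖ M) ≥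 D_KL^π(P ‖ 𝐏_π) + Σ_{i=1}^n D_KL^{π^{(Cᵢ)}}(P_π^{(Cᵢ)} ‖ Lᵢ). -/
open Filter Finset
open scoped Classical

/-- The restriction of `x` to the coordinates in `S`. -/
noncomputable def restr {d : ℕ} {X : Fin d → Type*} (S : Finset (Fin d)) (x : ∀ i, X i) :
    ∀ j : S, X j.1 :=
  fun j => x j.1

/-- The tensor product over the blocks `S i` of transition matrices `L i` on `𝒳^{(S i)}`. -/
noncomputable def tensorBlocks {d n : ℕ} {X : Fin d → Type*} (S : Fin n → Finset (Fin d))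
    (L : ∀ i : Fin n, (∀ j : S i, X j.1) → (∀ j : S i, X j.1) → ℝ) :
    (∀ i, X i) → (∀ i, X i) → ℝ :=
  fun x y => ∏ i, L i (restr (S i) x) (restr (S i) y)

/-- The normalization constant `Z(x,(Lᵢ)) := Σ_y ∏ᵢ Lᵢ(x^{(Cᵢ)},y^{(Cᵢ)})`. -/
noncomputable def cliqueZ {d n : ℕ} {X : Fin d → Type*} [∀ i, Fintype (X i)]
    (C : Fin n → Finset (Fin d))
    (L : ∀ i : Fin n, (∀ j : C i, X j.1) → (∀ j : C i, X j.1) → ℝ) (x : ∀ i, X i) : ℝ :=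
  ∑ y : ∀ i, X i, ∏ i, L i (restr (C i) x) (restr (C i) y)

/-- The `(Cᵢ)`-factorizable transition matrix
`M(x,y) := (∏ᵢ Lᵢ(x^{(Cᵢ)},y^{(Cᵢ)})) / Z(x,(Lᵢ))`. -/
noncomputable def cliqueMat {d n : ℕ} {X : Fin d → Type*} [∀ i, Fintype (X i)]
    (C : Fin n → Finset (Fin d))
    (L : ∀ i : Fin n, (∀ j : C i, X j.1) → (∀ j : C i, X j.1) → ℝ) :
    (∀ i, X i) → (∀ i, X i) → ℝ :=
  fun x y => (∏ i, L i (restr (C i) x) (restr (C i) y)) / cliqueZ C L x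

lemma coe_sum' {α : Type*} (s : Finset α) (f : α → ℝ) :
    ((∑ x ∈ s, f x : ℝ) : EReal) = ∑ x ∈ s, ((f x : ℝ) : EReal) :=
  map_sum (⟨⟨Real.toEReal, EReal.coe_zero⟩, EReal.coe_add⟩ : ℝ →+ EReal) f s

lemma sum_ne_bot' {α : Type*} (s : Finset α) (f : α → EReal) (h : ∀ a ∈ s, f a ≠ ⊥) :
    ∑ a ∈ s, f a ≠ ⊥ := by
  induction s using Finset.cons_induction with
  | empty => simp
  | cons a s ha ih =>
    rw [Finset.sum_cons]
    intro hc
    rcases EReal.add_eq_bot_iff.1 hc with h1 | h1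
    · exact h a (Finset.mem_cons_self a s) h1
    · exact ih (fun b hb => h b (Finset.mem_cons_of_mem hb)) h1

lemma sum_eq_top' {α : Type*} [DecidableEq α] (s : Finset α) (f : α → EReal) (a : α) (ha : a ∈ s)
    (hta : f a = ⊤) (h : ∀ b ∈ s, f b ≠ ⊥) : ∑ b ∈ s, f b = ⊤ := by
  rw [← Finset.add_sum_erase s f ha, hta]
  exact EReal.top_add_of_ne_bot (sum_ne_bot' _ _ fun b hb => h b (Finset.mem_of_mem_erase hb))

lemma pos_mul_ne_bot (c : ℝ) (hc : 0 < c) (s : EReal) (hs : s ≠ ⊥) : (c : EReal) * s ≠ ⊥ := by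
  induction s using EReal.rec with
  | bot => exact absurd rfl hs
  | coe r => rw [← EReal.coe_mul]; exact EReal.coe_ne_bot _
  | top => rw [EReal.mul_top_of_pos (by exact_mod_cast hc)]; simp

noncomputable def rklT (m l : ℝ) : ℝ := if m = 0 then 0 else m * Real.log (m / l)

noncomputable def rklDiv {Y : Type*} [Fintype Y] (π : Y → ℝ) (M L : Y → Y → ℝ) : ℝ :=
  ∑ x, π x * ∑ y, rklT (M x y) (L x y)

lemma klDiv_eq_top {Y : Type*} [Fintype Y] (π : Y → ℝ) (M L : Y → Y → ℝ)
    (hpos : ∀ x, 0 < π x) (x y : Y) (hM : M x y ≠ 0) (hL : L x y = 0) :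
    klDiv π M L = ⊤ := by
  have hinner : ∀ x' : Y, ∑ y', klTerm (M x' y') (L x' y') ≠ ⊥ :=
    fun x' => sum_ne_bot' _ _ fun b _ => klTerm_ne_bot _ _
  apply sum_eq_top' _ _ x (Finset.mem_univ x)
  · rw [sum_eq_top' _ _ y (Finset.mem_univ y) (by simp [klTerm, hM, hL])
      (fun b _ => klTerm_ne_bot _ _)]
    exact EReal.coe_mul_top_of_pos (hpos x)
  · intro b _
    exact pos_mul_ne_bot _ (hpos b) _ (hinner b)

lemma klDiv_eq_coe {Y : Type*} [Fintype Y] (π : Y → ℝ) (M L : Y → Y → ℝ)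
    (h : ∀ x y, M x y ≠ 0 → L x y ≠ 0) :
    klDiv π M L = ((rklDiv π M L : ℝ) : EReal) := by
  unfold klDiv rklDiv
  rw [coe_sum']
  refine Finset.sum_congr rfl fun x _ => ?_
  have : ∑ y, klTerm (M x y) (L x y) = ((∑ y, rklT (M x y) (L x y) : ℝ) : EReal) := by
    rw [coe_sum']
    refine Finset.sum_congr rfl fun y _ => ?_
    unfold klTerm rklT
    by_cases hm : M x y = 0
    · simp [hm]
    · rw [if_neg hm, if_neg hm, if_neg (h x y hm)]
  rw [this, ← EReal.coe_mul]

lemma sum_pair_ite {A B : Type*} [Fintype A] [Fintype B] [DecidableEq A] [DecidableEq B]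
    (v : A → B → ℝ) (a : A) (b : B) :
    ∑ xs : A, ∑ ys : B, (if xs = a ∧ ys = b then v xs ys else 0) = v a b := by
  rw [Finset.sum_eq_single a]
  · rw [Finset.sum_eq_single b]
    · simp
    · intro c _ hc; simp [hc]
    · simp
  · intro c _ hc
    apply Finset.sum_eq_zero; intro e _; simp [hc]
  · simp

lemma sum_swap4 {A B : Type*} [Fintype A] [Fintype B] (F : A → A → B → B → ℝ) :
    ∑ x : A, ∑ y : A, ∑ xs : B, ∑ ys : B, F x y xs ys
      = ∑ xs : B, ∑ ys : B, ∑ x : A, ∑ y : A, F x y xs ys :=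
  calc ∑ x : A, ∑ y : A, ∑ xs : B, ∑ ys : B, F x y xs ys
      = ∑ x : A, ∑ xs : B, ∑ y : A, ∑ ys : B, F x y xs ys :=
        Finset.sum_congr rfl fun x _ => Finset.sum_comm
    _ = ∑ xs : B, ∑ x : A, ∑ y : A, ∑ ys : B, F x y xs ys := Finset.sum_comm
    _ = ∑ xs : B, ∑ x : A, ∑ ys : B, ∑ y : A, F x y xs ys :=
        Finset.sum_congr rfl fun xs _ => Finset.sum_congr rfl fun x _ => Finset.sum_comm
    _ = ∑ xs : B, ∑ ys : B, ∑ x : A, ∑ y : A, F x y xs ys :=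
        Finset.sum_congr rfl fun xs _ => Finset.sum_comm

/-- Pythagorean inequality for clique factorizations: if the normalization constants of
`(Lᵢ)` dominate those of the keep-`Cᵢ`-in matrices, then
`D_KL^π(P ‖ M) ≥ D_KL^π(P ‖ 𝐏_π) + Σᵢ D_KL^{π^{(Cᵢ)}}(P_π^{(Cᵢ)} ‖ Lᵢ)`. -/
theorem stmt16 {d n : ℕ} {X : Fin d → Type*} [∀ i, Fintype (X i)]
    (C : Fin n → Finset (Fin d)) (hcov : ∀ j : Fin d, ∃ i, j ∈ C i)
    (π : (∀ i, X i) → ℝ) (hπ : IsProbMass π) (hpos : ∀ x, 0 < π x)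
    (P : (∀ i, X i) → (∀ i, X i) → ℝ) (hP : IsTransMat P)
    (L : ∀ i : Fin n, (∀ j : C i, X j.1) → (∀ j : C i, X j.1) → ℝ)
    (hL : ∀ i, IsTransMat (L i))
    (hZL : ∀ x, 0 < cliqueZ C L x)
    (hZP : ∀ x, 0 < cliqueZ C (fun i => keepS π P (C i)) x)
    (hZZ : ∀ x, cliqueZ C (fun i => keepS π P (C i)) x ≤ cliqueZ C L x) :
    klDiv π P (cliqueMat C fun i => keepS π P (C i)) +
        ∑ i, klDiv (margS π (C i)) (keepS π P (C i)) (L i) ≤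
      klDiv π P (cliqueMat C L) := by
  classical
  by_cases htop : ∃ x y, P x y ≠ 0 ∧ cliqueMat C L x y = 0
  · obtain ⟨x, y, hP0, hM0⟩ := htop
    rw [klDiv_eq_top π P _ hpos x y hP0 hM0]
    exact le_top
  push_neg at htop
  have hne : Nonempty (∀ i, X i) := by
    by_contra h
    rw [not_nonempty_iff] at h
    have h2 := hπ.2
    rw [Finset.univ_eq_empty, Finset.sum_empty] at h2
    exact zero_ne_one h2
  obtain ⟨x₀⟩ := hne
  have hmarg : ∀ (S : Finset (Fin d)) (xs : ∀ j : S, X j.1), 0 < margS π S xs := by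
    intro S xs
    unfold margS
    apply Finset.sum_pos'
    · intro x _
      split_ifs
      · exact (hpos x).le
      · exact le_rfl
    · refine ⟨fun j => if h : j ∈ S then xs ⟨j, h⟩ else x₀ j, Finset.mem_univ _, ?_⟩
      have hcond : ∀ j : S, (fun j' => if h : j' ∈ S then xs ⟨j', h⟩ else x₀ j') j.1 = xs j :=
        fun j => dif_pos j.2
      rw [if_pos hcond]
      exact hpos _
  have hnum : ∀ (S : Finset (Fin d)) (xs ys : ∀ j : S, X j.1),
      margS π S xs * keepS π P S xs ys
        = ∑ x : ∀ i, X i, ∑ y : ∀ i, X i,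
            if (∀ j : S, x j.1 = xs j) ∧ (∀ j : S, y j.1 = ys j) then π x * P x y else 0 := by
    intro S xs ys
    unfold keepS
    rw [mul_comm, div_mul_cancel₀ _ (hmarg S xs).ne']
  have hkeep_pos : ∀ (S : Finset (Fin d)) (x y : ∀ i, X i), P x y ≠ 0 →
      0 < keepS π P S (restr S x) (restr S y) := by
    intro S x y hp
    unfold keepS
    apply div_pos _ (hmarg S _)
    apply Finset.sum_pos'
    · intro a _
      apply Finset.sum_nonneg; intro b _
      split_ifs
      · exact mul_nonneg (hpos a).le (hP.1 a b)
      · exact le_rfl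
    · refine ⟨x, Finset.mem_univ _, ?_⟩
      apply Finset.sum_pos'
      · intro b _
        split_ifs
        · exact mul_nonneg (hpos x).le (hP.1 x b)
        · exact le_rfl
      · refine ⟨y, Finset.mem_univ _, ?_⟩
        rw [if_pos ⟨fun j => rfl, fun j => rfl⟩]
        exact mul_pos (hpos x) (lt_of_le_of_ne (hP.1 x y) (Ne.symm hp))
  have hLpos : ∀ (i : Fin n) (x y : ∀ i, X i), P x y ≠ 0 →
      L i (restr (C i) x) (restr (C i) y) ≠ 0 := by
    intro i x y hp
    have h1 := htop x y hp
    unfold cliqueMat at h1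
    have h2 : (∏ i, L i (restr (C i) x) (restr (C i) y)) ≠ 0 := by
      intro h0; rw [h0, zero_div] at h1; exact h1 rfl
    exact Finset.prod_ne_zero_iff.1 h2 i (Finset.mem_univ i)
  have hQL : ∀ (i : Fin n) (xs ys : ∀ j : C i, X j.1),
      keepS π P (C i) xs ys ≠ 0 → L i xs ys ≠ 0 := by
    intro i xs ys hq
    have hn : (∑ x : ∀ i, X i, ∑ y : ∀ i, X i,
        if (∀ j : C i, x j.1 = xs j) ∧ (∀ j : C i, y j.1 = ys j)
        then π x * P x y else 0) ≠ 0 := by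
      intro h0
      apply hq
      unfold keepS
      rw [h0, zero_div]
    obtain ⟨x, _, hx⟩ := Finset.exists_ne_zero_of_sum_ne_zero hn
    obtain ⟨y, _, hy⟩ := Finset.exists_ne_zero_of_sum_ne_zero hx
    by_cases hc : (∀ j : C i, x j.1 = xs j) ∧ (∀ j : C i, y j.1 = ys j)
    · have hp : P x y ≠ 0 := by
        intro h0; apply hy; rw [if_pos hc, h0, mul_zero]
      have hres := hLpos i x y hp
      have hxs : restr (C i) x = xs := funext fun j => hc.1 j
      have hys : restr (C i) y = ys := funext fun j => hc.2 j
      rwa [hxs, hys] at hres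
    · exact absurd (if_neg hc) hy
  have hMPpos : ∀ x y, P x y ≠ 0 → cliqueMat C (fun i => keepS π P (C i)) x y ≠ 0 := by
    intro x y hp
    unfold cliqueMat
    exact (div_pos (Finset.prod_pos fun i _ => hkeep_pos (C i) x y hp) (hZP x)).ne'
  rw [klDiv_eq_coe π P (cliqueMat C fun i => keepS π P (C i)) hMPpos,
    klDiv_eq_coe π P (cliqueMat C L) htop]
  have hsum : ∀ i : Fin n, klDiv (margS π (C i)) (keepS π P (C i)) (L i)
      = ((rklDiv (margS π (C i)) (keepS π P (C i)) (L i) : ℝ) : EReal) :=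
    fun i => klDiv_eq_coe _ _ _ (hQL i)
  simp only [hsum]
  rw [← coe_sum', ← EReal.coe_add, EReal.coe_le_coe_iff]
  -- fiberwise summation lemma
  have fib : ∀ (S : Finset (Fin d)) (g : (∀ j : S, X j.1) → (∀ j : S, X j.1) → ℝ),
      ∑ x : ∀ i, X i, ∑ y : ∀ i, X i, π x * P x y * g (restr S x) (restr S y)
        = ∑ xs, ∑ ys, margS π S xs * keepS π P S xs ys * g xs ys := by
    intro S g
    have h1 : ∀ (xs ys : ∀ j : S, X j.1), margS π S xs * keepS π P S xs ys * g xs ys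
        = ∑ x : ∀ i, X i, ∑ y : ∀ i, X i,
            if (∀ j : S, x j.1 = xs j) ∧ (∀ j : S, y j.1 = ys j)
            then π x * P x y * g xs ys else 0 := by
      intro xs ys
      rw [hnum S xs ys, Finset.sum_mul]
      refine Finset.sum_congr rfl fun x _ => ?_
      rw [Finset.sum_mul]
      refine Finset.sum_congr rfl fun y _ => ?_
      split_ifs <;> simp
    have h2 : ∀ x y : ∀ i, X i, π x * P x y * g (restr S x) (restr S y)
        = ∑ xs, ∑ ys,
            if (∀ j : S, x j.1 = xs j) ∧ (∀ j : S, y j.1 = ys j)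
            then π x * P x y * g xs ys else 0 := by
      intro x y
      have hc : ∀ (xs ys : ∀ j : S, X j.1),
          ((∀ j : S, x j.1 = xs j) ∧ (∀ j : S, y j.1 = ys j))
          ↔ (xs = restr S x ∧ ys = restr S y) := by
        intro xs ys
        constructor
        · rintro ⟨ha, hb⟩
          exact ⟨funext fun j => (ha j).symm, funext fun j => (hb j).symm⟩
        · rintro ⟨rfl, rfl⟩
          exact ⟨fun j => rfl, fun j => rfl⟩
      rw [eq_comm]
      calc (∑ xs, ∑ ys, if (∀ j : S, x j.1 = xs j) ∧ (∀ j : S, y j.1 = ys j)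
              then π x * P x y * g xs ys else 0)
          = ∑ xs, ∑ ys, if xs = restr S x ∧ ys = restr S y
              then π x * P x y * g xs ys else 0 := by
            refine Finset.sum_congr rfl fun xs _ => Finset.sum_congr rfl fun ys _ => ?_
            exact if_congr (hc xs ys) rfl rfl
        _ = π x * P x y * g (restr S x) (restr S y) := sum_pair_ite _ _ _
    simp only [h2]
    rw [sum_swap4]
    exact Finset.sum_congr rfl fun xs _ => Finset.sum_congr rfl fun ys _ => (h1 xs ys).symm
  -- pointwise key identity
  have key : ∀ x y : ∀ i, X i,
      rklT (P x y) (cliqueMat C L x y)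
        = rklT (P x y) (cliqueMat C (fun i => keepS π P (C i)) x y)
          + (∑ i, P x y * (Real.log (keepS π P (C i) (restr (C i) x) (restr (C i) y))
              - Real.log (L i (restr (C i) x) (restr (C i) y))))
          + P x y * (Real.log (cliqueZ C L x)
              - Real.log (cliqueZ C (fun i => keepS π P (C i)) x)) := by
    intro x y
    by_cases hp : P x y = 0
    · simp [rklT, hp]
    · have hLp : ∀ i : Fin n, L i (restr (C i) x) (restr (C i) y) ≠ 0 := fun i => hLpos i x y hp
      have hQp : ∀ i : Fin n, keepS π P (C i) (restr (C i) x) (restr (C i) y) ≠ 0 :=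
        fun i => (hkeep_pos (C i) x y hp).ne'
      have hprodL : (∏ i, L i (restr (C i) x) (restr (C i) y)) ≠ 0 :=
        Finset.prod_ne_zero_iff.2 fun i _ => hLp i
      have hprodQ : (∏ i, keepS π P (C i) (restr (C i) x) (restr (C i) y)) ≠ 0 :=
        Finset.prod_ne_zero_iff.2 fun i _ => hQp i
      unfold rklT cliqueMat
      rw [if_neg hp, if_neg hp,
        Real.log_div hp (div_ne_zero hprodL (hZL x).ne'),
        Real.log_div hp (div_ne_zero hprodQ (hZP x).ne'),
        Real.log_div hprodL (hZL x).ne', Real.log_div hprodQ (hZP x).ne',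
        Real.log_prod (fun i _ => hLp i), Real.log_prod (fun i _ => hQp i),
        ← Finset.mul_sum, Finset.sum_sub_distrib]
      ring
  -- middle term identification
  have mid : (∑ x, π x * ∑ y, ∑ i, P x y
        * (Real.log (keepS π P (C i) (restr (C i) x) (restr (C i) y))
            - Real.log (L i (restr (C i) x) (restr (C i) y))))
      = ∑ i, rklDiv (margS π (C i)) (keepS π P (C i)) (L i) := by
    calc (∑ x, π x * ∑ y, ∑ i, P x y
          * (Real.log (keepS π P (C i) (restr (C i) x) (restr (C i) y))
              - Real.log (L i (restr (C i) x) (restr (C i) y))))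
        = ∑ x, ∑ y, ∑ i, π x * P x y
            * (Real.log (keepS π P (C i) (restr (C i) x) (restr (C i) y))
                - Real.log (L i (restr (C i) x) (restr (C i) y))) := by
          refine Finset.sum_congr rfl fun x _ => ?_
          rw [Finset.mul_sum]
          refine Finset.sum_congr rfl fun y _ => ?_
          rw [Finset.mul_sum]
          exact Finset.sum_congr rfl fun i _ => by ring
      _ = ∑ i, ∑ x : ∀ i, X i, ∑ y : ∀ i, X i, π x * P x y
            * (Real.log (keepS π P (C i) (restr (C i) x) (restr (C i) y))
                - Real.log (L i (restr (C i) x) (restr (C i) y))) := by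
          exact Eq.trans (Finset.sum_congr rfl fun x _ => Finset.sum_comm) Finset.sum_comm
      _ = ∑ i, ∑ xs, ∑ ys, margS π (C i) xs * keepS π P (C i) xs ys
            * (Real.log (keepS π P (C i) xs ys) - Real.log (L i xs ys)) :=
          Finset.sum_congr rfl fun i _ =>
            fib (C i) (fun xs ys => Real.log (keepS π P (C i) xs ys) - Real.log (L i xs ys))
      _ = ∑ i, rklDiv (margS π (C i)) (keepS π P (C i)) (L i) := by
          refine Finset.sum_congr rfl fun i _ => ?_
          unfold rklDiv
          refine Finset.sum_congr rfl fun xs _ => ?_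
          rw [Finset.mul_sum]
          refine Finset.sum_congr rfl fun ys _ => ?_
          rw [mul_assoc]
          congr 1
          unfold rklT
          by_cases hq : keepS π P (C i) xs ys = 0
          · simp [hq]
          · rw [if_neg hq, Real.log_div hq (hQL i xs ys hq)]
  -- main identity
  have main : rklDiv π P (cliqueMat C L)
      = rklDiv π P (cliqueMat C (fun i => keepS π P (C i)))
        + (∑ i, rklDiv (margS π (C i)) (keepS π P (C i)) (L i))
        + ∑ x, π x * (Real.log (cliqueZ C L x)
            - Real.log (cliqueZ C (fun i => keepS π P (C i)) x)) := by
    rw [← mid]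
    unfold rklDiv
    rw [← Finset.sum_add_distrib, ← Finset.sum_add_distrib]
    refine Finset.sum_congr rfl fun x _ => ?_
    have e1 : (∑ y, rklT (P x y) (cliqueMat C L x y))
        = (∑ y, rklT (P x y) (cliqueMat C (fun i => keepS π P (C i)) x y))
          + (∑ y, ∑ i, P x y
              * (Real.log (keepS π P (C i) (restr (C i) x) (restr (C i) y))
                  - Real.log (L i (restr (C i) x) (restr (C i) y))))
          + (Real.log (cliqueZ C L x)
              - Real.log (cliqueZ C (fun i => keepS π P (C i)) x)) := by
      calc (∑ y, rklT (P x y) (cliqueMat C L x y))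
          = ∑ y, (rklT (P x y) (cliqueMat C (fun i => keepS π P (C i)) x y)
              + (∑ i, P x y
                  * (Real.log (keepS π P (C i) (restr (C i) x) (restr (C i) y))
                      - Real.log (L i (restr (C i) x) (restr (C i) y))))
              + P x y * (Real.log (cliqueZ C L x)
                  - Real.log (cliqueZ C (fun i => keepS π P (C i)) x))) :=
            Finset.sum_congr rfl fun y _ => key x y
        _ = _ := by
            rw [Finset.sum_add_distrib, Finset.sum_add_distrib, ← Finset.sum_mul, hP.2 x,
              one_mul]
    rw [e1]
    ring
  rw [main]
  have hZ : 0 ≤ ∑ x, π x * (Real.log (cliqueZ C L x)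
      - Real.log (cliqueZ C (fun i => keepS π P (C i)) x)) := by
    apply Finset.sum_nonneg
    intro x _
    apply mul_nonneg (hpos x).le
    rw [sub_nonneg]
    exact Real.log_le_log (hZP x) (hZZ x)
  linarith
end
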